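/- Let (M,i) be an image-finite pointed modal transition system over a finite event set Act such that (M,i) ⊨ᵃ ψ for every formula ψ ∈ Φ. Then for every Hennessy–Milner logic formula φ, (M,i) ⊨ᶜ φ implies (M,i) ⊨ᵃ φ. -/
import Mathlib


/-- A mixed transition system over event set `Act` with state set `σ`:
two transition relations `Ra` (asserted/must) and `Rc` (consistent/may). -/
structure MTS (Act σ : Type) where
  Ra : σ → Act → σ → Prop
  Rc : σ → Act → σ → Prop

namespace MTS

/-- `M` is a modal transition system iff `Ra ⊆ Rc`. -/
def IsModal {Act σ : Type} (M : MTS Act σ) : Prop :=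
  ∀ s α t, M.Ra s α t → M.Rc s α t

/-- `M` is image-finite. -/
def ImageFinite {Act σ : Type} (M : MTS Act σ) : Prop :=
  ∀ (s : σ) (α : Act), {t | M.Ra s α t}.Finite ∧ {t | M.Rc s α t}.Finite

end MTS

/-- A labelled transition system viewed as a mixed transition system `(Σ, R, R)`. -/
def LTS {Act σ : Type} (R : σ → Act → σ → Prop) : MTS Act σ := ⟨R, R⟩

/-- `Q` is a refinement from `M` to `N`. -/
def IsRefinement {Act σ τ : Type} (M : MTS Act σ) (N : MTS Act τ) (Q : σ → τ → Prop) : Prop :=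
  ∀ s t, Q s t → ∀ α : Act,
    (∀ s', M.Ra s α s' → ∃ t', N.Ra t α t' ∧ Q s' t') ∧
    (∀ t', N.Rc t α t' → ∃ s', M.Rc s α s' ∧ Q s' t')

/-- `(M,i) ⪯ (N,j)`: the pointed system `(N,j)` refines `(M,i)`. -/
def Refines {Act σ τ : Type} (M : MTS Act σ) (i : σ) (N : MTS Act τ) (j : τ) : Prop :=
  ∃ Q, IsRefinement M N Q ∧ Q i j

/-- Modes for the two judgments of the semantics: `a` (asserted), `c` (consistent). -/
inductive RMode where
  | a | c

/-- The dual mode: `¬a = c` and `¬c = a`. -/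
def RMode.negm : RMode → RMode
  | .a => .c
  | .c => .a

/-- The transition relation of mode `m`. -/
def MTS.R {Act σ : Type} (M : MTS Act σ) : RMode → σ → Act → σ → Prop
  | .a => M.Ra
  | .c => M.Rc

/-- Formulas of Hennessy–Milner logic over `Act`. -/
inductive HML (Act : Type) where
  | tt
  | neg (φ : HML Act)
  | dia (α : Act) (φ : HML Act)
  | and (φ ψ : HML Act)

/-- Larsen's semantics of Hennessy–Milner logic with two judgments `⊨ᵃ`, `⊨ᶜ`. -/
def Sat {Act σ : Type} (M : MTS Act σ) : HML Act → RMode → σ → Prop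
  | .tt, _, _ => True
  | .neg φ, m, s => ¬ Sat M φ m.negm s
  | .dia α φ, m, s => ∃ s', M.R m s α s' ∧ Sat M φ m s'
  | .and φ ψ, m, s => Sat M φ m s ∧ Sat M ψ m s

namespace HML

/-- `[α]φ = ¬⟨α⟩¬φ`. -/
def box {Act : Type} (α : Act) (φ : HML Act) : HML Act := .neg (.dia α (.neg φ))

/-- `φ ∨ ψ = ¬(¬φ ∧ ¬ψ)`. -/
def orf {Act : Type} (φ ψ : HML Act) : HML Act := .neg (.and (.neg φ) (.neg ψ))

/-- Finite conjunction (empty conjunction is `tt`). -/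
def bigAnd {Act : Type} : List (HML Act) → HML Act
  | [] => .tt
  | φ :: l => .and φ (bigAnd l)

/-- Finite disjunction (empty disjunction is `¬tt`). -/
def bigOr {Act : Type} : List (HML Act) → HML Act
  | [] => .neg .tt
  | φ :: l => orf φ (bigOr l)

/-- Modal depth of an HML formula. -/
def depth {Act : Type} : HML Act → ℕ
  | .tt => 0
  | .neg φ => φ.depth
  | .dia _ φ => 1 + φ.depth
  | .and φ ψ => max φ.depth ψ.depth

end HML

/-- Terms of the process algebra MPA. -/
inductive MPA (Act : Type) where
  | zero
  | bot
  | prefMust (α : Act) (p : MPA Act)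
  | prefMay (α : Act) (p : MPA Act)
  | plus (p q : MPA Act)

namespace MPA

variable {Act : Type} [DecidableEq Act]

/-- Must-successors of an MPA term for event `β` (structural operational semantics). -/
def must : MPA Act → Act → List (MPA Act)
  | .zero, _ => []
  | .bot, _ => []
  | .prefMust α p, β => if β = α then [p] else []
  | .prefMay _ _, _ => []
  | .plus p q, β => p.must β ++ q.must β

/-- All (must or may) successors of an MPA term for event `β`. -/
def may : MPA Act → Act → List (MPA Act)
  | .zero, _ => []
  | .bot, _ => [.bot]
  | .prefMust α p, β => if β = α then [p] else []
  | .prefMay α p, β => if β = α then [p] else []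
  | .plus p q, β => p.may β ++ q.may β

/-- The modal transition system `⟦·⟧` given by the structural operational semantics of MPA:
`Ra` is the set of must-transitions, `Rc` the set of all transitions. -/
def mts : MTS Act (MPA Act) :=
  ⟨fun p α q => q ∈ p.must α, fun p α q => q ∈ p.may α⟩

theorem sizeOf_lt_of_mem_must :
    ∀ (t : MPA Act) (α : Act) (r : MPA Act), r ∈ t.must α → sizeOf r < sizeOf t := by
  intro t
  induction t with
  | zero => intro α r h; simp [must] at h
  | bot => intro α r h; simp [must] at h
  | prefMust β p ih =>
      intro α r h
      simp only [must] at h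
      split at h <;> simp_all
  | prefMay β p ih => intro α r h; simp [must] at h
  | plus p q ihp ihq =>
      intro α r h
      simp only [must, List.mem_append] at h
      rcases h with h | h
      · have := ihp α r h; simp; omega
      · have := ihq α r h; simp; omega

theorem sizeOf_le_of_mem_may :
    ∀ (t : MPA Act) (α : Act) (r : MPA Act), r ∈ t.may α → sizeOf r ≤ sizeOf t := by
  intro t
  induction t with
  | zero => intro α r h; simp [may] at h
  | bot => intro α r h; simp [may] at h; simp [h]
  | prefMust β p ih =>
      intro α r h
      simp only [may] at h
      split at h <;> simp_all
  | prefMay β p ih =>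
      intro α r h
      simp only [may] at h
      split at h <;> simp_all
  | plus p q ihp ihq =>
      intro α r h
      simp only [may, List.mem_append] at h
      rcases h with h | h
      · have := ihp α r h; simp; omega
      · have := ihq α r h; simp; omega

theorem sizeOf_lt_plus_of_mem_may (p q : MPA Act) (α : Act) (r : MPA Act)
    (h : r ∈ (MPA.plus p q).may α) : sizeOf r < sizeOf (MPA.plus p q) := by
  simp only [may, List.mem_append] at h
  rcases h with h | h
  · have := sizeOf_le_of_mem_may p α r h; simp; omega
  · have := sizeOf_le_of_mem_may q α r h; simp; omega

end MPA

/-- The characteristic Hennessy–Milner formula `φ_p` of an MPA term `p`. -/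
noncomputable def charForm {Act : Type} [Fintype Act] [DecidableEq Act] : MPA Act → HML Act
  | .zero =>
      .bigAnd (((Finset.univ : Finset Act).toList).map fun α => .neg (.dia α .tt))
  | .bot => .tt
  | .prefMust α p =>
      .and (.dia α (charForm p)) (.and (HML.box α (charForm p))
        (.bigAnd ((((Finset.univ : Finset Act).toList).filter (fun β => β ≠ α)).map
          fun β => .neg (.dia β .tt))))
  | .prefMay α p =>
      .and (HML.box α (charForm p))
        (.bigAnd ((((Finset.univ : Finset Act).toList).filter (fun β => β ≠ α)).map
          fun β => .neg (.dia β .tt)))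
  | .plus p q =>
      .and
        (.bigAnd (((Finset.univ : Finset Act).toList).flatMap fun α =>
          ((MPA.plus p q).must α).attach.map fun r => HML.dia α (charForm r.1)))
        (.bigAnd (((Finset.univ : Finset Act).toList).map fun α =>
          HML.box α (.bigOr (((MPA.plus p q).may α).attach.map fun r => charForm r.1))))
decreasing_by
  all_goals first
    | exact MPA.sizeOf_lt_of_mem_must _ _ _ r.2
    | exact MPA.sizeOf_lt_plus_of_mem_may _ _ _ _ r.2
    | (simp; omega)
    | simp

/-- The formula `ψ_{w,α,p} = [δ₁]…[δₙ](⟨α⟩φ_p ∨ ¬⟨α⟩φ_p)`; the set `Φ` consists of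
all such formulas. -/
noncomputable def psiForm {Act : Type} [Fintype Act] [DecidableEq Act]
    (w : List Act) (α : Act) (p : MPA Act) : HML Act :=
  w.foldr (fun δ φ => HML.box δ φ)
    (HML.orf (.dia α (charForm p)) (.neg (.dia α (charForm p))))

/-- `Rᶜ`-reachability in a mixed transition system. -/
def MTS.ReachC {Act σ : Type} (M : MTS Act σ) : σ → σ → Prop :=
  Relation.ReflTransGen (fun s t => ∃ α, M.Rc s α t)
section Aux

variable {Act σ : Type} [Fintype Act] [DecidableEq Act] (M : MTS Act σ)

lemma negm_negm (m : RMode) : m.negm.negm = m := by cases m <;> rfl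

lemma sat_orf (φ ψ : HML Act) (m : RMode) (s : σ) :
    Sat M (HML.orf φ ψ) m s ↔ Sat M φ m s ∨ Sat M ψ m s := by
  simp only [HML.orf, Sat, negm_negm]
  tauto

lemma sat_box (α : Act) (φ : HML Act) (m : RMode) (s : σ) :
    Sat M (HML.box α φ) m s ↔ ∀ t, M.R m.negm s α t → Sat M φ m t := by
  simp only [HML.box, Sat, negm_negm]
  push_neg
  simp

lemma sat_bigAnd (l : List (HML Act)) (m : RMode) (s : σ) :
    Sat M (HML.bigAnd l) m s ↔ ∀ φ ∈ l, Sat M φ m s := by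
  induction l with
  | nil => simp [HML.bigAnd, Sat]
  | cons φ l ih => simp [HML.bigAnd, Sat, ih]

lemma sat_bigOr (l : List (HML Act)) (m : RMode) (s : σ) :
    Sat M (HML.bigOr l) m s ↔ ∃ φ ∈ l, Sat M φ m s := by
  induction l with
  | nil => simp [HML.bigOr, Sat]
  | cons φ l ih => simp [HML.bigOr, sat_orf, ih]

/-- Sum of a list of MPA terms. -/
def sumList : List (MPA Act) → MPA Act :=
  List.foldr .plus .zero

lemma mem_sumList_must (l : List (MPA Act)) (β : Act) (r : MPA Act) :
    r ∈ (sumList l).must β ↔ ∃ x ∈ l, r ∈ x.must β := by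
  induction l with
  | nil => simp [sumList, MPA.must]
  | cons x l ih =>
    rw [show sumList (x :: l) = MPA.plus x (sumList l) from rfl]
    simp [MPA.must, ih]

lemma mem_sumList_may (l : List (MPA Act)) (β : Act) (r : MPA Act) :
    r ∈ (sumList l).may β ↔ ∃ x ∈ l, r ∈ x.may β := by
  induction l with
  | nil => simp [sumList, MPA.may]
  | cons x l ih =>
    rw [show sumList (x :: l) = MPA.plus x (sumList l) from rfl]
    simp [MPA.may, ih]

/-- The depth-`n` MPA approximation of a state `t` of an image-finite system. -/
noncomputable def approx (hMf : M.ImageFinite) : ℕ → σ → MPA Act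
  | 0, _ => .bot
  | n+1, t => .plus .zero (sumList (
      (Finset.univ : Finset Act).toList.flatMap fun α =>
        ((hMf t α).1.toFinset.toList.map fun t' => MPA.prefMust α (approx hMf n t')) ++
        ((hMf t α).2.toFinset.toList.map fun t' => MPA.prefMay α (approx hMf n t'))))

lemma mem_must_approx (hMf : M.ImageFinite) (n : ℕ) (t : σ) (β : Act) (r : MPA Act) :
    r ∈ (approx M hMf (n+1) t).must β ↔ ∃ t', M.Ra t β t' ∧ r = approx M hMf n t' := by
  simp only [approx, MPA.must, List.nil_append, mem_sumList_must, List.mem_flatMap,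
    List.mem_append, List.mem_map, Finset.mem_toList, Finset.mem_univ, true_and,
    Set.Finite.mem_toFinset]
  constructor
  · rintro ⟨x, ⟨α, hx⟩, hr⟩
    rcases hx with ⟨t', ht', rfl⟩ | ⟨t', ht', rfl⟩
    · simp only [MPA.must] at hr
      split at hr
      · rename_i hβ; subst hβ; simp at hr; exact ⟨t', ht', hr⟩
      · simp at hr
    · simp [MPA.must] at hr
  · rintro ⟨t', ht', rfl⟩
    exact ⟨MPA.prefMust β (approx M hMf n t'), ⟨β, Or.inl ⟨t', ht', rfl⟩⟩,
      by simp [MPA.must]⟩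

lemma mem_may_approx (hM : M.IsModal) (hMf : M.ImageFinite) (n : ℕ) (t : σ) (β : Act)
    (r : MPA Act) :
    r ∈ (approx M hMf (n+1) t).may β ↔ ∃ t', M.Rc t β t' ∧ r = approx M hMf n t' := by
  simp only [approx, MPA.may, mem_sumList_may, List.mem_flatMap,
    List.mem_append, List.mem_map, Finset.mem_toList, Finset.mem_univ, true_and,
    Set.Finite.mem_toFinset]
  constructor
  · rintro (h | ⟨x, ⟨α, hx⟩, hr⟩)
    · simp at h
    rcases hx with ⟨t', ht', rfl⟩ | ⟨t', ht', rfl⟩ <;>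
    · simp only [MPA.may] at hr
      split at hr
      · rename_i hβ; subst hβ; simp at hr
        exact ⟨t', by first | exact ⟨hM _ _ _ ht', hr⟩ | exact ⟨ht', hr⟩⟩
      · simp at hr
  · rintro ⟨t', ht', rfl⟩
    exact Or.inr ⟨MPA.prefMay β (approx M hMf n t'), ⟨β, Or.inr ⟨t', ht', rfl⟩⟩,
      by simp [MPA.may]⟩

lemma sat_charForm_plus (p q : MPA Act) (m : RMode) (s : σ) :
    Sat M (charForm (.plus p q)) m s ↔
      ((∀ α, ∀ r ∈ (MPA.plus p q).must α, ∃ s', M.R m s α s' ∧ Sat M (charForm r) m s') ∧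
       (∀ α s', M.R m.negm s α s' → ∃ r ∈ (MPA.plus p q).may α, Sat M (charForm r) m s')) := by
  rw [charForm]
  simp only [Sat, sat_bigAnd]
  constructor
  · rintro ⟨h1, h2⟩
    constructor
    · intro α r hr
      have hmem : HML.dia α (charForm r) ∈
          (Finset.univ : Finset Act).toList.flatMap (fun α =>
            ((MPA.plus p q).must α).attach.map fun r => HML.dia α (charForm r.1)) := by
        simp only [List.mem_flatMap, List.mem_map, List.mem_attach, true_and,
          Finset.mem_toList, Finset.mem_univ]
        exact ⟨α, ⟨⟨r, hr⟩, rfl⟩⟩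
      exact h1 _ hmem
    · intro α s' hs'
      have hmem : HML.box α (.bigOr (((MPA.plus p q).may α).attach.map fun r =>
          charForm r.1)) ∈ (Finset.univ : Finset Act).toList.map (fun α =>
            HML.box α (.bigOr (((MPA.plus p q).may α).attach.map fun r => charForm r.1))) := by
        simp only [List.mem_map, Finset.mem_toList, Finset.mem_univ, true_and]
        exact ⟨α, rfl⟩
      have hb := h2 _ hmem
      rw [sat_box] at hb
      have hb' := hb s' hs'
      rw [sat_bigOr] at hb'
      rcases hb' with ⟨ψ, hψmem, hψ⟩
      simp only [List.mem_map, List.mem_attach, true_and] at hψmem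
      rcases hψmem with ⟨⟨r, hr⟩, rfl⟩
      exact ⟨r, hr, hψ⟩
  · rintro ⟨h1, h2⟩
    constructor
    · intro φ hφ
      simp only [List.mem_flatMap, List.mem_map, List.mem_attach, true_and,
        Finset.mem_toList, Finset.mem_univ] at hφ
      rcases hφ with ⟨α, ⟨⟨r, hr⟩, rfl⟩⟩
      exact h1 α r hr
    · intro φ hφ
      simp only [List.mem_map, Finset.mem_toList, Finset.mem_univ, true_and] at hφ
      rcases hφ with ⟨α, rfl⟩
      rw [sat_box]
      intro s' hs'
      rw [sat_bigOr]
      rcases h2 α s' hs' with ⟨r, hr, hsat⟩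
      exact ⟨charForm r, List.mem_map.2 ⟨⟨r, hr⟩, List.mem_attach _ _, rfl⟩, hsat⟩

/-- Characterization of satisfaction of `φ_{approx (n+1) t}`. -/
lemma sat_charForm_approx_succ (hM : M.IsModal) (hMf : M.ImageFinite) (n : ℕ) (t : σ)
    (m : RMode) (s : σ) :
    Sat M (charForm (approx M hMf (n+1) t)) m s ↔
      ((∀ α t', M.Ra t α t' →
          ∃ s', M.R m s α s' ∧ Sat M (charForm (approx M hMf n t')) m s') ∧
       (∀ α s', M.R m.negm s α s' →
          ∃ t', M.Rc t α t' ∧ Sat M (charForm (approx M hMf n t')) m s')) := by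
  have e : approx M hMf (n+1) t = MPA.plus MPA.zero (sumList (
      (Finset.univ : Finset Act).toList.flatMap fun α =>
        ((hMf t α).1.toFinset.toList.map fun t' => MPA.prefMust α (approx M hMf n t')) ++
        ((hMf t α).2.toFinset.toList.map fun t' => MPA.prefMay α (approx M hMf n t')))) := rfl
  rw [e, sat_charForm_plus, ← e]
  simp only [mem_must_approx, mem_may_approx M hM]
  constructor
  · rintro ⟨h1, h2⟩
    refine ⟨fun α t' ht' => h1 α _ ⟨t', ht', rfl⟩, fun α s' hs' => ?_⟩
    rcases h2 α s' hs' with ⟨r, ⟨t', ht', rfl⟩, hsat⟩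
    exact ⟨t', ht', hsat⟩
  · rintro ⟨h1, h2⟩
    refine ⟨fun α r hr => ?_, fun α s' hs' => ?_⟩
    · rcases hr with ⟨t', ht', rfl⟩
      exact h1 α t' ht'
    · rcases h2 α s' hs' with ⟨t', ht', hsat⟩
      exact ⟨_, ⟨t', ht', rfl⟩, hsat⟩

/-- Every state `c`-satisfies the characteristic formula of its approximation. -/
lemma sat_c_approx (hM : M.IsModal) (hMf : M.ImageFinite) :
    ∀ (n : ℕ) (t : σ), Sat M (charForm (approx M hMf n t)) .c t := by
  intro n
  induction n with
  | zero => intro t; simp [approx, charForm, Sat]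
  | succ n ih =>
    intro t
    rw [sat_charForm_approx_succ M hM]
    exact ⟨fun α t' ht' => ⟨t', hM _ _ _ ht', ih t'⟩,
      fun α s' hs' => ⟨s', hM _ _ _ hs', ih s'⟩⟩

/-- Transfer lemma: `a`-satisfying `φ_{approx n t}` at `u` transfers all formulas of
depth `≤ n` between `t` and `u`. -/
lemma approx_transfer (hM : M.IsModal) (hMf : M.ImageFinite) :
    ∀ (n : ℕ) (t u : σ), Sat M (charForm (approx M hMf n t)) .a u →
      ∀ φ : HML Act, φ.depth ≤ n →
        (Sat M φ .a t → Sat M φ .a u) ∧ (Sat M φ .c u → Sat M φ .c t) := by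
  intro n
  induction n with
  | zero =>
    intro t u _ φ hd
    induction φ with
    | tt => simp [Sat]
    | neg φ ihφ =>
      simp only [HML.depth] at hd
      have := ihφ hd
      simp only [Sat, RMode.negm]
      tauto
    | dia α φ ihφ => simp [HML.depth] at hd
    | and φ ψ ihφ ihψ =>
      simp only [HML.depth, max_le_iff] at hd
      have h1 := ihφ hd.1
      have h2 := ihψ hd.2
      simp only [Sat]
      tauto
  | succ n ih =>
    intro t u hsat φ hd
    rw [sat_charForm_approx_succ M hM] at hsat
    obtain ⟨H1, H2⟩ := hsat
    induction φ with
    | tt => exact ⟨fun _ => trivial, fun _ => trivial⟩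
    | neg φ ihφ =>
      simp only [HML.depth] at hd
      have hih := ihφ hd
      simp only [Sat, RMode.negm]
      exact ⟨fun hn hc => hn (hih.2 hc), fun hn ha => hn (hih.1 ha)⟩
    | dia α φ ihφ =>
      have hd' : φ.depth ≤ n := by simp only [HML.depth] at hd; omega
      constructor
      · rintro ⟨t', ht', hφt'⟩
        rcases H1 α t' ht' with ⟨u', hu', hsat'⟩
        exact ⟨u', hu', (ih t' u' hsat' φ hd').1 hφt'⟩
      · rintro ⟨u', hu', hφu'⟩
        rcases H2 α u' hu' with ⟨t'', ht'', hsat'⟩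
        exact ⟨t'', ht'', (ih t'' u' hsat' φ hd').2 hφu'⟩
    | and φ ψ ihφ ihψ =>
      simp only [HML.depth, max_le_iff] at hd
      have h1 := ihφ hd.1
      have h2 := ihψ hd.2
      simp only [Sat]
      exact ⟨fun hx => ⟨h1.1 hx.1, h2.1 hx.2⟩, fun hx => ⟨h1.2 hx.1, h2.2 hx.2⟩⟩

/-- `Rᶜ`-path along a word. -/
def PathC : σ → List Act → σ → Prop
  | s, [], t => s = t
  | s, δ :: w, t => ∃ s', M.Rc s δ s' ∧ PathC s' w t

lemma pathC_snoc : ∀ (w : List Act) (s t u : σ) (α : Act),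
    PathC M s w t → M.Rc t α u → PathC M s (w ++ [α]) u := by
  intro w
  induction w with
  | nil => rintro s t u α rfl h; exact ⟨u, h, rfl⟩
  | cons δ w ih =>
    rintro s t u α ⟨s', hs', hp⟩ h
    exact ⟨s', hs', ih _ _ _ _ hp h⟩

lemma psi_transfer (α : Act) (p : MPA Act) :
    ∀ (w : List Act) (s t : σ), PathC M s w t → Sat M (psiForm w α p) .a s →
      Sat M (.dia α (charForm p)) .c t → Sat M (.dia α (charForm p)) .a t := by
  intro w
  induction w with
  | nil =>
    rintro s t rfl hs hc
    simp only [psiForm, List.foldr_nil] at hs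
    rw [sat_orf] at hs
    rcases hs with hs | hs
    · exact hs
    · exact absurd hc hs
  | cons δ w ih =>
    rintro s t ⟨s', hs', hp⟩ hs hc
    simp only [psiForm, List.foldr_cons] at hs
    rw [show (HML.box δ (List.foldr (fun δ φ => HML.box δ φ) _ w) : HML Act) = HML.box δ (psiForm w α p) from rfl, sat_box] at hs
    exact ih s' t hp (hs s' hs') hc

end Aux

/-- If the image-finite pointed modal transition system `(M,i)`
satisfies every formula of `Φ` in mode `a`, then for every HML formula `φ`,
`(M,i) ⊨ᶜ φ` implies `(M,i) ⊨ᵃ φ`. -/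
theorem sat_c_implies_sat_a_of_psiForms {Act σ : Type} [Fintype Act] [DecidableEq Act]
    (M : MTS Act σ) (hM : M.IsModal) (hMf : M.ImageFinite) (i : σ)
    (h : ∀ (w : List Act) (α : Act) (p : MPA Act), Sat M (psiForm w α p) .a i)
    (φ : HML Act) : Sat M φ .c i → Sat M φ .a i := by
  suffices H : ∀ (φ : HML Act) (w : List Act) (t : σ), PathC M i w t →
      Sat M φ .c t → Sat M φ .a t from H φ [] i rfl
  intro φ
  induction φ with
  | tt => intro w t _ _; trivial
  | neg φ ihφ =>
    intro w t hp hc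
    simp only [Sat, RMode.negm] at hc ⊢
    exact fun hcφ => hc (ihφ w t hp hcφ)
  | dia α φ ihφ =>
    intro w t hp hc
    rcases hc with ⟨s', hs', hcφ⟩
    have haφ : Sat M φ .a s' := ihφ (w ++ [α]) s' (pathC_snoc M w i t s' α hp hs') hcφ
    set n := φ.depth with hn
    set p := approx M hMf n s' with hpdef
    have hcd : Sat M (.dia α (charForm p)) .c t :=
      ⟨s', hs', sat_c_approx M hM hMf n s'⟩
    have had : Sat M (.dia α (charForm p)) .a t :=
      psi_transfer M α p w i t hp (h w α p) hcd
    rcases had with ⟨u, hu, hsatu⟩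
    exact ⟨u, hu, (approx_transfer M hM hMf n s' u hsatu φ le_rfl).1 haφ⟩
  | and φ ψ ihφ ihψ =>
    intro w t hp hc
    exact ⟨ihφ w t hp hc.1, ihψ w t hp hc.2⟩
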